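/- Let 0 < T and consider the recursion ξ_1 = a > 0, ξ_{i+1} = ((c + ξ_i^{κ/n})/(c − ξ_i^{κ/n}))² ξ_i for i = 1,…,n−1, where c > 1, κ > 0, and ξ_i^{κ/n} < c for all i. Define η^{(n)}_{i/n} := (1/n) log ξ_i. Then η^{(n)} satisfies the Euler-scheme recursion η^{(n)}_{(i+1)/n} = η^{(n)}_{i/n} + (2/n) log(1 + 2 e^{κ η^{(n)}_{i/n}} / (c − e^{κ η^{(n)}_{i/n}})) with initial value η^{(n)}_{1/n} = (1/n) log a. Moreover, if a ≤ 1, then since the vector field v(y) = 2 log(1 + 2e^{κy}/(c − e^{κy})) is nonnegative and increasing in y, the Euler iterates are dominated by the exact solution of dη_t/dt = v(η_t), η_0 = 0, evaluated at t = 1: η^{(n)}_1 ≤ η_1. -/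

import Mathlib

private lemma v_nonneg_aux (c u : ℝ) (hu : 0 < u) (huc : u < c) :
    0 ≤ 2 * Real.log (1 + 2 * u / (c - u)) := by
  have hcu : 0 < c - u := by linarith
  have h1 : (1:ℝ) ≤ 1 + 2 * u / (c - u) := le_add_of_nonneg_right (by positivity)
  have := Real.log_nonneg h1
  linarith

private lemma v_mono_aux (c κ y1 y2 : ℝ) (hκ : 0 < κ) (h12 : y1 ≤ y2)
    (h2 : Real.exp (κ * y2) < c) :
    2 * Real.log (1 + 2 * Real.exp (κ * y1) / (c - Real.exp (κ * y1))) ≤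
      2 * Real.log (1 + 2 * Real.exp (κ * y2) / (c - Real.exp (κ * y2))) := by
  set u1 := Real.exp (κ * y1) with hu1def
  set u2 := Real.exp (κ * y2) with hu2def
  have hu1 : 0 < u1 := Real.exp_pos _
  have hu2 : 0 < u2 := Real.exp_pos _
  have h12' : u1 ≤ u2 := Real.exp_le_exp.mpr (by nlinarith)
  have hc1 : 0 < c - u1 := by linarith
  have hc2 : 0 < c - u2 := by linarith
  have harg1 : (0:ℝ) < 1 + 2 * u1 / (c - u1) := by positivity
  have hle : 2 * u1 / (c - u1) ≤ 2 * u2 / (c - u2) := by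
    rw [div_le_div_iff₀ hc1 hc2]
    nlinarith
  have := Real.log_le_log harg1 (by linarith : 1 + 2 * u1 / (c - u1) ≤ 1 + 2 * u2 / (c - u2))
  linarith

/-- The logarithms `η_i = (1/n) log ξ_i` of the non-geometric Gaussian nodes satisfy an
Euler-scheme recursion for the ODE `η' = 2 log(1 + 2e^{κη}/(c - e^{κη}))`, and if `a ≤ 1`
the Euler iterates are dominated by any solution of the ODE started at `0`. -/
theorem nongeometric_nodes_euler_scheme (n : ℕ) (hn : 1 ≤ n)
    (c κ a : ℝ) (hc : 1 < c) (hκ : 0 < κ) (ha : 0 < a)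
    (ξ : ℕ → ℝ) (hξ1 : ξ 1 = a)
    (hrec : ∀ i, 1 ≤ i → i < n →
      ξ (i + 1) = ((c + ξ i ^ (κ / (n : ℝ))) / (c - ξ i ^ (κ / (n : ℝ)))) ^ 2 * ξ i)
    (hpos : ∀ i, 1 ≤ i → i ≤ n → 0 < ξ i)
    (hlt : ∀ i, 1 ≤ i → i ≤ n → ξ i ^ (κ / (n : ℝ)) < c) :
    (∀ i, 1 ≤ i → i < n →
      (1 / (n : ℝ)) * Real.log (ξ (i + 1)) =
        (1 / (n : ℝ)) * Real.log (ξ i) +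
          (2 / (n : ℝ)) * Real.log (1 +
            2 * Real.exp (κ * ((1 / (n : ℝ)) * Real.log (ξ i))) /
              (c - Real.exp (κ * ((1 / (n : ℝ)) * Real.log (ξ i)))))) ∧
    (a ≤ 1 → ∀ ηs : ℝ → ℝ, ηs 0 = 0 →
      (∀ t ∈ Set.Icc (0:ℝ) 1, Real.exp (κ * ηs t) < c) →
      (∀ t ∈ Set.Icc (0:ℝ) 1, HasDerivAt ηs
        (2 * Real.log (1 + 2 * Real.exp (κ * ηs t) / (c - Real.exp (κ * ηs t)))) t) →
      (1 / (n : ℝ)) * Real.log (ξ n) ≤ ηs 1) := by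
  have hn0 : (0:ℝ) < n := by exact_mod_cast Nat.lt_of_lt_of_le Nat.zero_lt_one hn
  have hexpeq : ∀ i, 1 ≤ i → i ≤ n →
      Real.exp (κ * ((1 / (n : ℝ)) * Real.log (ξ i))) = ξ i ^ (κ / (n : ℝ)) := by
    intro i h1 h2
    rw [Real.rpow_def_of_pos (hpos i h1 h2)]
    congr 1
    field_simp
  have part1 : ∀ i, 1 ≤ i → i < n →
      (1 / (n : ℝ)) * Real.log (ξ (i + 1)) =
        (1 / (n : ℝ)) * Real.log (ξ i) +
          (2 / (n : ℝ)) * Real.log (1 +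
            2 * Real.exp (κ * ((1 / (n : ℝ)) * Real.log (ξ i))) /
              (c - Real.exp (κ * ((1 / (n : ℝ)) * Real.log (ξ i))))) := by
    intro i h1 h2
    have hpi : 0 < ξ i := hpos i h1 h2.le
    have hx : Real.exp (κ * ((1 / (n : ℝ)) * Real.log (ξ i))) = ξ i ^ (κ / (n : ℝ)) :=
      hexpeq i h1 h2.le
    set x := ξ i ^ (κ / (n : ℝ)) with hxdef
    have hxpos : 0 < x := Real.rpow_pos_of_pos hpi _
    have hxlt : x < c := hlt i h1 h2.le
    have hcx : 0 < c - x := by linarith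
    have hfrac : 0 < (c + x) / (c - x) := by positivity
    have harg : 1 + 2 * x / (c - x) = (c + x) / (c - x) := by
      field_simp
      ring
    rw [hrec i h1 h2, hx, harg]
    rw [Real.log_mul (by positivity) (ne_of_gt hpi), Real.log_pow]
    push_cast
    ring
  refine ⟨part1, ?_⟩
  intro ha1 ηs hη0 hexp hderiv
  have hcont : ContinuousOn ηs (Set.Icc 0 1) := fun t ht =>
    (hderiv t ht).continuousAt.continuousWithinAt
  have hmono : MonotoneOn ηs (Set.Icc 0 1) := by
    apply monotoneOn_of_deriv_nonneg (convex_Icc 0 1) hcont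
    · intro t ht
      rw [interior_Icc] at ht
      exact (hderiv t (Set.Ioo_subset_Icc_self ht)).differentiableAt.differentiableWithinAt
    · intro t ht
      rw [interior_Icc] at ht
      have h := hderiv t (Set.Ioo_subset_Icc_self ht)
      rw [h.deriv]
      exact v_nonneg_aux c _ (Real.exp_pos _) (hexp t (Set.Ioo_subset_Icc_self ht))
  have stepA : ∀ s t : ℝ, s ∈ Set.Icc (0:ℝ) 1 → t ∈ Set.Icc (0:ℝ) 1 → s ≤ t →
      ηs s + (t - s) *
        (2 * Real.log (1 + 2 * Real.exp (κ * ηs s) / (c - Real.exp (κ * ηs s)))) ≤ ηs t := by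
    intro s t hs ht hst
    set K := 2 * Real.log (1 + 2 * Real.exp (κ * ηs s) / (c - Real.exp (κ * ηs s))) with hK
    have hsub : Set.Icc s 1 ⊆ Set.Icc (0:ℝ) 1 := Set.Icc_subset_Icc hs.1 le_rfl
    have hg : MonotoneOn (fun u => ηs u - u * K) (Set.Icc s 1) := by
      apply monotoneOn_of_deriv_nonneg (convex_Icc s 1)
      · exact (hcont.mono hsub).sub ((continuous_id.mul continuous_const).continuousOn)
      · intro u hu
        rw [interior_Icc] at hu
        have hu' : u ∈ Set.Icc (0:ℝ) 1 := hsub (Set.Ioo_subset_Icc_self hu)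
        have hlin : HasDerivAt (fun u : ℝ => u * K) K u := by
          simpa using (hasDerivAt_id u).mul_const K
        exact ((hderiv u hu').sub hlin).differentiableAt.differentiableWithinAt
      · intro u hu
        rw [interior_Icc] at hu
        have hu' : u ∈ Set.Icc (0:ℝ) 1 := hsub (Set.Ioo_subset_Icc_self hu)
        have hlin : HasDerivAt (fun u : ℝ => u * K) K u := by
          simpa using (hasDerivAt_id u).mul_const K
        have hd : HasDerivAt (fun u => ηs u - u * K) _ u := (hderiv u hu').sub hlin
        rw [hd.deriv]
        have hss : ηs s ≤ ηs u := hmono hs hu' hu.1.le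
        have := v_mono_aux c κ (ηs s) (ηs u) hκ hss (hexp u hu')
        rw [hK]
        linarith
    have hgle := hg ⟨le_rfl, hs.2⟩ ⟨hst, ht.2⟩ hst
    simp only at hgle
    linarith
  have key : ∀ i, 1 ≤ i → i ≤ n →
      (1 / (n : ℝ)) * Real.log (ξ i) ≤ ηs ((i : ℝ) / n) := by
    intro i
    induction i with
    | zero => intro h; omega
    | succ k ih =>
      intro _ hk1
      rcases Nat.eq_zero_or_pos k with hk0 | hkpos
      · subst hk0
        have hmem1 : (1:ℝ)/n ∈ Set.Icc (0:ℝ) 1 := by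
          constructor
          · positivity
          · rw [div_le_one hn0]; exact_mod_cast hn
        have h01 : ηs 0 ≤ ηs ((1:ℝ)/n) := hmono ⟨le_rfl, zero_le_one⟩ hmem1 (by positivity)
        have hlog : Real.log a ≤ 0 := Real.log_nonpos ha.le ha1
        have : (1/(n:ℝ)) * Real.log (ξ 1) ≤ 0 := by
          rw [hξ1]
          have : 0 ≤ 1/(n:ℝ) := by positivity
          nlinarith
        rw [hη0] at h01
        push_cast
        linarith
      · have hk : k < n := by omega
        have hik := ih hkpos hk.le
        have hsmem : ((k:ℝ)/n) ∈ Set.Icc (0:ℝ) 1 := by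
          constructor
          · positivity
          · rw [div_le_one hn0]; exact_mod_cast hk.le
        have htmem : (((k:ℝ)+1)/n) ∈ Set.Icc (0:ℝ) 1 := by
          constructor
          · positivity
          · rw [div_le_one hn0]; exact_mod_cast hk1
        have hrec' := part1 k hkpos hk
        set y := (1/(n:ℝ)) * Real.log (ξ k) with hy
        set s := (k:ℝ)/n with hs
        have hvy : 2 * Real.log (1 + 2 * Real.exp (κ * y) / (c - Real.exp (κ * y))) ≤
            2 * Real.log (1 + 2 * Real.exp (κ * ηs s) / (c - Real.exp (κ * ηs s))) :=
          v_mono_aux c κ y (ηs s) hκ hik (hexp s hsmem)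
        have hA := stepA s (((k:ℝ)+1)/n) hsmem htmem (by
          rw [hs, div_le_div_iff_of_pos_right hn0] <;> linarith)
        have hts : ((k:ℝ)+1)/n - s = 1/n := by
          rw [hs]; field_simp; ring
        rw [hts] at hA
        have h1n : 0 ≤ 1/(n:ℝ) := by positivity
        push_cast
        calc (1/(n:ℝ)) * Real.log (ξ (k+1))
            = y + (1/(n:ℝ)) * (2 * Real.log (1 + 2 * Real.exp (κ * y) / (c - Real.exp (κ * y)))) := by
              rw [hrec']; ring
          _ ≤ ηs s + (1/(n:ℝ)) * (2 * Real.log (1 + 2 * Real.exp (κ * ηs s) / (c - Real.exp (κ * ηs s)))) := by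
              nlinarith
          _ ≤ ηs (((k:ℝ)+1)/n) := hA
  have := key n hn le_rfl
  rwa [div_self (ne_of_gt hn0)] at this
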